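/- Variation of the XNOR-neuron pre-activation with respect to a weight: fix Boolean inputs x₁, …, xₘ ∈ B, an integer constant w₀, and define s : Bᵐ → ℤ by s(w) = w₀ + Σᵢ [xnor(xᵢ, wᵢ)], where [·] maps T to 1 and F to 0. Then for every j and every w ∈ Bᵐ, the partial variation of s with respect to w_j equals e(x_j), i.e., it is +1 if x_j = T and -1 if x_j = F. -/
import Mathlib
/-- The three-valued logic `M = {T, 0, F}`. -/
inductive Tri where
  | T : Tri
  | Z : Tri
  | F : Tri
deriving DecidableEq

/-- Inclusion of the Boolean set `B = {T, F}` into `M`. -/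
def Tri.ofBool : Bool → Tri
  | true => .T
  | false => .F

/-- Integer embedding `e : M → ℤ`, with `e(T) = 1`, `e(0) = 0`, `e(F) = -1`. -/
def Tri.e : Tri → ℤ
  | .T => 1
  | .Z => 0
  | .F => -1

/-- Mixed-type XNOR of `a ∈ M` with an integer `z`:
`z` if `a = T`, `0` if `a = 0`, `-z` if `a = F`. -/
def mxnorZ : Tri → ℤ → ℤ
  | .T, z => z
  | .Z, _ => 0
  | .F, z => -z

/-- Variation `δ(x → y)` of a Boolean `x` to `y`, with order `F < T`
(`false < true`): `T` if `y > x`, `0` if `y = x`, `F` if `y < x`. -/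
def bvar (x y : Bool) : Tri :=
  if x = y then .Z else if y then .T else .F

/-- `[·] : B → ℤ` mapping `T` to `1` and `F` to `0`. -/
def ind (b : Bool) : ℤ :=
  if b then 1 else 0

/-- Partial variation of `f : Bᵐ → ℤ` with respect to the `j`-th coordinate:
`f'_j(w) = xnor(δ(w_j → ¬w_j), f(w_{¬j}) - f(w))`. -/
def varZi {m : ℕ} (f : (Fin m → Bool) → ℤ) (j : Fin m) (w : Fin m → Bool) : ℤ :=
  mxnorZ (bvar (w j) (!(w j))) (f (Function.update w j (!(w j))) - f w)

theorem xnor_neuron_weight_variation (m : ℕ) (x : Fin m → Bool) (w₀ : ℤ)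
    (j : Fin m) (w : Fin m → Bool) :
    varZi (fun v => w₀ + ∑ i, ind ((x i) == (v i))) j w
      = Tri.e (Tri.ofBool (x j)) := by
  simp only [varZi]
  have h : (∑ i, ind (x i == Function.update w j (!(w j)) i)) - (∑ i, ind (x i == w i))
      = ind (x j == !(w j)) - ind (x j == w j) := by
    rw [← Finset.sum_sub_distrib]
    rw [Fintype.sum_eq_single j]
    · simp
    · intro i hi
      simp [Function.update_of_ne hi]
  have key : (w₀ + ∑ i, ind (x i == Function.update w j (!(w j)) i)) - (w₀ + ∑ i, ind (x i == w i))
      = ind (x j == !(w j)) - ind (x j == w j) := by omega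
  rw [key]
  cases hx : x j <;> cases hw : w j <;> simp [bvar, mxnorZ, ind, Tri.ofBool, Tri.e]
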